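/- Monotonicity of the second order scheme in two dimensions: Let N ≥ 3, h > 0, Δt > 0, D > 0. Let M_{i,j} > 0 for i,j = 1,…,N, and let u_{i,j}, v_{i,j} be reals with u_{1,j} = u_{N,j} = 0 for all j and v_{i,1} = v_{i,N} = 0 for all i. Adopt the ghost conventions M_{0,j} := M_{2,j}, M_{N+1,j} := M_{N−1,j}, M_{i,0} := M_{i,2}, M_{i,N+1} := M_{i,N−1}, u_{0,j} := −u_{2,j}, u_{N+1,j} := −u_{N−1,j}, v_{i,0} := −v_{i,2}, v_{i,N+1} := −v_{i,N−1}, and the folded values ĝ_{0,j} := g_{2,j}, ĝ_{N+1,j} := g_{N−1,j}, ĝ_{i,0} := g_{i,2}, ĝ_{i,N+1} := g_{i,N−1}, with ĝ_{i,j} = g_{i,j} otherwise. Define the N²×N² real matrix A by (Ag)_{i,j} = M_{i,j}g_{i,j} + Δt·(u_{i−1,j}ĝ_{i−1,j} − u_{i+1,j}ĝ_{i+1,j})/(2h) + Δt·(v_{i,j−1}ĝ_{i,j−1} − v_{i,j+1}ĝ_{i,j+1})/(2h) + Δt·D·[−(M_{i−1,j}+M_{i,j})ĝ_{i−1,j}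 + (M_{i−1,j}+2M_{i,j}+M_{i+1,j})g_{i,j} − (M_{i,j}+M_{i+1,j})ĝ_{i+1,j}]/(2h²) + Δt·D·[−(M_{i,j−1}+M_{i,j})ĝ_{i,j−1} + (M_{i,j−1}+2M_{i,j}+M_{i,j+1})g_{i,j} − (M_{i,j}+M_{i,j+1})ĝ_{i,j+1}]/(2h²) for all i,j = 1,…,N. Assume (i) h·max{|u_{i,j}|, |v_{i,j}|} ≤ D·min{M_{i−1,j}, M_{i+1,j}, M_{i,j}, M_{i,j−1}, M_{i,j+1}} for all i,j (using the ghost conventions), and (ii) M_{i,j} + Δt·(u_{i−1,j} − u_{i+1,j})/(2h) + Δt·(v_{i,j−1} − v_{i,j+1})/(2h) > 0 for all i,j (using the ghost conventions). Then A is a nonsingular M-matrix; in particular A is invertible and every entry of A⁻¹ is nonnegative. -/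

import Mathlib

open Matrix BigOperators

/-- Folding of grid indices `0, 1, …, N+1` (1-based) onto `Fin N` (0-based), implementing the
ghost conventions `ĝ₀ := g₂` and `ĝ_{N+1} := g_{N−1}` in each coordinate direction. -/
def foldIdx2D (N : ℕ) (hN : 3 ≤ N) (j : ℕ) : Fin N :=
  if h : 1 ≤ j ∧ j ≤ N then ⟨j - 1, by omega⟩
  else if j = 0 then ⟨1, by omega⟩
  else ⟨N - 2, by omega⟩


lemma foldIdx2D_succ (N : ℕ) (hN : 3 ≤ N) (k : Fin N) :
    foldIdx2D N hN (k.1 + 1) = k := by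
  have hk := k.2
  simp only [foldIdx2D]
  rw [dif_pos ⟨by omega, by omega⟩]
  exact Fin.ext (by simp)

lemma min5_le₂ (a b c d e : ℝ) : min a (min b (min c (min d e))) ≤ b :=
  le_trans (min_le_right _ _) (min_le_left _ _)
lemma min5_le₄ (a b c d e : ℝ) : min a (min b (min c (min d e))) ≤ d :=
  le_trans (min_le_right _ _) (le_trans (min_le_right _ _)
    (le_trans (min_le_right _ _) (min_le_left _ _)))
lemma min5_le₅ (a b c d e : ℝ) : min a (min b (min c (min d e))) ≤ e :=
  le_trans (min_le_right _ _) (le_trans (min_le_right _ _)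
    (le_trans (min_le_right _ _) (min_le_right _ _)))

lemma coef_nonpos (h Δt D uu m : ℝ) (hh : 0 < h) (hΔt : 0 < Δt) (hD : 0 < D)
    (hkey : h * uu ≤ D * m) :
    Δt * uu / (2 * h) - Δt * D * m / (2 * h ^ 2) ≤ 0 := by
  rw [sub_nonpos, div_le_div_iff₀ (by positivity) (by positivity)]
  nlinarith [mul_le_mul_of_nonneg_left hkey (by positivity : (0:ℝ) ≤ 2 * Δt * h)]

lemma nonneg_of_mulVec_nonneg {n : Type*} [Fintype n] [DecidableEq n]
    (A : Matrix n n ℝ)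
    (hoff : ∀ p q, p ≠ q → A p q ≤ 0)
    (hrow : ∀ p, 0 < ∑ q, A p q)
    (x : n → ℝ) (hx : ∀ p, 0 ≤ A.mulVec x p) : ∀ p, 0 ≤ x p := by
  intro p
  obtain ⟨p₀, -, hp₀⟩ := Finset.exists_min_image Finset.univ x ⟨p, Finset.mem_univ p⟩
  have h0 : 0 ≤ x p₀ := by
    by_contra hc
    push_neg at hc
    have key : A.mulVec x p₀ ≤ (∑ q, A p₀ q) * x p₀ := by
      rw [Matrix.mulVec, dotProduct, Finset.sum_mul]
      refine Finset.sum_le_sum fun q _ => ?_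
      rcases eq_or_ne q p₀ with rfl | hq
      · exact le_refl _
      · exact mul_le_mul_of_nonpos_left (hp₀ q (Finset.mem_univ q)) (hoff p₀ q (Ne.symm hq))
    nlinarith [hx p₀, hrow p₀]
  exact h0.trans (hp₀ p (Finset.mem_univ p))

lemma mmatrix_main {n : Type*} [Fintype n] [DecidableEq n] (A : Matrix n n ℝ)
    (hoff : ∀ p q, p ≠ q → A p q ≤ 0)
    (hrow : ∀ p, 0 < ∑ q, A p q) :
    IsUnit A ∧ ∀ p q, 0 ≤ A⁻¹ p q := by
  have hker : ∀ x, A.mulVec x = 0 → x = 0 := by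
    intro x hx
    have h1 := nonneg_of_mulVec_nonneg A hoff hrow x (fun p => by simp [hx])
    have h2 := nonneg_of_mulVec_nonneg A hoff hrow (-x)
      (fun p => by simp [Matrix.mulVec_neg, hx])
    funext p
    have a1 := h1 p; have a2 := h2 p
    simp only [Pi.neg_apply, Pi.zero_apply] at a1 a2 ⊢
    linarith
  have hdet : A.det ≠ 0 := by
    intro hd
    obtain ⟨w, hw, hw0⟩ := Matrix.exists_mulVec_eq_zero_iff.mpr hd
    exact hw (hker w hw0)
  have hu : IsUnit A := (Matrix.isUnit_iff_isUnit_det A).mpr (isUnit_iff_ne_zero.mpr hdet)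
  refine ⟨hu, fun p q => ?_⟩
  refine nonneg_of_mulVec_nonneg A hoff hrow (fun r => A⁻¹ r q) (fun r => ?_) p
  have he : A.mulVec (fun r => A⁻¹ r q) r = (A * A⁻¹) r q := by
    simp [Matrix.mulVec, Matrix.mul_apply, dotProduct]
  rw [he, Matrix.mul_nonsing_inv A (isUnit_iff_ne_zero.mpr hdet)]
  by_cases hrq : r = q <;> simp [Matrix.one_apply, hrq]

set_option maxHeartbeats 2000000 in
/-- **Monotonicity of the second order scheme in two dimensions.** Under the mesh constraint
`h max{|u_{i,j}|, |v_{i,j}|} ≤ D min{M_{i−1,j}, M_{i+1,j}, M_{i,j}, M_{i,j−1}, M_{i,j+1}}` and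
the time step constraint `M_{i,j} + Δt (u_{i−1,j} − u_{i+1,j})/(2h)
+ Δt (v_{i,j−1} − v_{i,j+1})/(2h) > 0` (with the ghost conventions and `u·n = 0` on the
boundary), the coefficient matrix `A` of the backward Euler second order finite difference
scheme (grid index of `p : Fin N × Fin N` being `(p.1+1, p.2+1)`) is a nonsingular M-matrix:
nonpositive off-diagonal entries, invertible, and `A⁻¹` entrywise nonnegative. -/
theorem stmt_7 (N : ℕ) (hN : 3 ≤ N) (h Δt D : ℝ)
    (hh : 0 < h) (hΔt : 0 < Δt) (hD : 0 < D)
    (M u v : ℕ → ℕ → ℝ)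
    (hMpos : ∀ i j, 1 ≤ i → i ≤ N → 1 ≤ j → j ≤ N → 0 < M i j)
    (hubc : ∀ j, 1 ≤ j → j ≤ N → u 1 j = 0 ∧ u N j = 0)
    (hvbc : ∀ i, 1 ≤ i → i ≤ N → v i 1 = 0 ∧ v i N = 0)
    (hMghost : ∀ j, 1 ≤ j → j ≤ N →
      M 0 j = M 2 j ∧ M (N + 1) j = M (N - 1) j ∧
      M j 0 = M j 2 ∧ M j (N + 1) = M j (N - 1))
    (huvghost : ∀ j, 1 ≤ j → j ≤ N →
      u 0 j = -u 2 j ∧ u (N + 1) j = -u (N - 1) j ∧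
      v j 0 = -v j 2 ∧ v j (N + 1) = -v j (N - 1))
    (A : Matrix (Fin N × Fin N) (Fin N × Fin N) ℝ)
    (hA : ∀ g : Fin N × Fin N → ℝ, ∀ p : Fin N × Fin N,
      A.mulVec g p =
        M (p.1.1 + 1) (p.2.1 + 1) * g p
        + Δt * (u p.1.1 (p.2.1 + 1) * g (foldIdx2D N hN p.1.1, foldIdx2D N hN (p.2.1 + 1))
            - u (p.1.1 + 2) (p.2.1 + 1) *
                g (foldIdx2D N hN (p.1.1 + 2), foldIdx2D N hN (p.2.1 + 1))) / (2 * h)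
        + Δt * (v (p.1.1 + 1) p.2.1 * g (foldIdx2D N hN (p.1.1 + 1), foldIdx2D N hN p.2.1)
            - v (p.1.1 + 1) (p.2.1 + 2) *
                g (foldIdx2D N hN (p.1.1 + 1), foldIdx2D N hN (p.2.1 + 2))) / (2 * h)
        + Δt * D * (-(M p.1.1 (p.2.1 + 1) + M (p.1.1 + 1) (p.2.1 + 1)) *
                g (foldIdx2D N hN p.1.1, foldIdx2D N hN (p.2.1 + 1))
            + (M p.1.1 (p.2.1 + 1) + 2 * M (p.1.1 + 1) (p.2.1 + 1)
                + M (p.1.1 + 2) (p.2.1 + 1)) * g p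
            - (M (p.1.1 + 1) (p.2.1 + 1) + M (p.1.1 + 2) (p.2.1 + 1)) *
                g (foldIdx2D N hN (p.1.1 + 2), foldIdx2D N hN (p.2.1 + 1))) / (2 * h ^ 2)
        + Δt * D * (-(M (p.1.1 + 1) p.2.1 + M (p.1.1 + 1) (p.2.1 + 1)) *
                g (foldIdx2D N hN (p.1.1 + 1), foldIdx2D N hN p.2.1)
            + (M (p.1.1 + 1) p.2.1 + 2 * M (p.1.1 + 1) (p.2.1 + 1)
                + M (p.1.1 + 1) (p.2.1 + 2)) * g p
            - (M (p.1.1 + 1) (p.2.1 + 1) + M (p.1.1 + 1) (p.2.1 + 2)) *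
                g (foldIdx2D N hN (p.1.1 + 1), foldIdx2D N hN (p.2.1 + 2))) / (2 * h ^ 2))
    (cond1 : ∀ i j, 1 ≤ i → i ≤ N → 1 ≤ j → j ≤ N →
      h * max |u i j| |v i j| ≤
        D * min (M (i - 1) j) (min (M (i + 1) j)
          (min (M i j) (min (M i (j - 1)) (M i (j + 1))))))
    (cond2 : ∀ i j, 1 ≤ i → i ≤ N → 1 ≤ j → j ≤ N →
      0 < M i j + Δt * (u (i - 1) j - u (i + 1) j) / (2 * h)
            + Δt * (v i (j - 1) - v i (j + 1)) / (2 * h)) :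
    (∀ p q, p ≠ q → A p q ≤ 0) ∧ IsUnit A ∧ ∀ p q, 0 ≤ A⁻¹ p q := by
  classical
  -- slot-wise consequences of cond1
  have key : ∀ i j, 1 ≤ i → i ≤ N → 1 ≤ j → j ≤ N →
      h * |u i j| ≤ D * M (i - 1) j ∧ h * |u i j| ≤ D * M (i + 1) j ∧
      h * |v i j| ≤ D * M i (j - 1) ∧ h * |v i j| ≤ D * M i (j + 1) := by
    intro i j h1 h2 h3 h4
    have hc := cond1 i j h1 h2 h3 h4
    have hmu : |u i j| ≤ max |u i j| |v i j| := le_max_left _ _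
    have hmv : |v i j| ≤ max |u i j| |v i j| := le_max_right _ _
    have hmu' := mul_le_mul_of_nonneg_left hmu hh.le
    have hmv' := mul_le_mul_of_nonneg_left hmv hh.le
    have m1 := mul_le_mul_of_nonneg_left
      (min_le_left (M (i-1) j) (min (M (i+1) j) (min (M i j) (min (M i (j-1)) (M i (j+1)))))) hD.le
    have m2 := mul_le_mul_of_nonneg_left
      (min5_le₂ (M (i-1) j) (M (i+1) j) (M i j) (M i (j-1)) (M i (j+1))) hD.le
    have m4 := mul_le_mul_of_nonneg_left
      (min5_le₄ (M (i-1) j) (M (i+1) j) (M i j) (M i (j-1)) (M i (j+1))) hD.le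
    have m5 := mul_le_mul_of_nonneg_left
      (min5_le₅ (M (i-1) j) (M (i+1) j) (M i j) (M i (j-1)) (M i (j+1))) hD.le
    exact ⟨by linarith, by linarith, by linarith, by linarith⟩
  have keyabs : ∀ x : ℝ, h * x ≤ h * |x| ∧ h * (-x) ≤ h * |x| := fun x =>
    ⟨mul_le_mul_of_nonneg_left (le_abs_self x) hh.le,
     mul_le_mul_of_nonneg_left (neg_le_abs x) hh.le⟩
  have hDM : ∀ i j, 1 ≤ i → i ≤ N → 1 ≤ j → j ≤ N → 0 < D * M i j :=
    fun i j h1 h2 h3 h4 => mul_pos hD (hMpos i j h1 h2 h3 h4)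
  -- off-diagonal entries are nonpositive
  have hoff : ∀ p q : Fin N × Fin N, p ≠ q → A p q ≤ 0 := by
    intro p q hpq
    have hp1 : (p.1 : ℕ) < N := p.1.2
    have hp2 : (p.2 : ℕ) < N := p.2.2
    -- the four directional inequalities
    have hMW : h * u (p.1:ℕ) ((p.2:ℕ)+1) ≤
        D * (M (p.1:ℕ) ((p.2:ℕ)+1) + M ((p.1:ℕ)+1) ((p.2:ℕ)+1)) := by
      rcases Nat.eq_zero_or_pos (p.1:ℕ) with h0 | h0
      · rw [h0]
        obtain ⟨hu0, -, -, -⟩ := huvghost ((p.2:ℕ)+1) (by omega) (by omega)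
        obtain ⟨hM0, -, -, -⟩ := hMghost ((p.2:ℕ)+1) (by omega) (by omega)
        rw [hu0, hM0]
        have hk := (key 2 ((p.2:ℕ)+1) (by omega) (by omega) (by omega) (by omega)).1
        have e : (2:ℕ) - 1 = 1 := rfl
        rw [e] at hk
        have := (keyabs (u 2 ((p.2:ℕ)+1))).2
        have := hDM 2 ((p.2:ℕ)+1) (by omega) (by omega) (by omega) (by omega)
        linarith
      · have hk := (key (p.1:ℕ) ((p.2:ℕ)+1) (by omega) (by omega) (by omega) (by omega)).2.1
        have := (keyabs (u (p.1:ℕ) ((p.2:ℕ)+1))).1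
        have := hDM (p.1:ℕ) ((p.2:ℕ)+1) (by omega) (by omega) (by omega) (by omega)
        linarith
    have hME : h * (-(u ((p.1:ℕ)+2) ((p.2:ℕ)+1))) ≤
        D * (M ((p.1:ℕ)+1) ((p.2:ℕ)+1) + M ((p.1:ℕ)+2) ((p.2:ℕ)+1)) := by
      rcases Nat.lt_or_ge ((p.1:ℕ)+2) (N+1) with h0 | h0
      · have hk := (key ((p.1:ℕ)+2) ((p.2:ℕ)+1) (by omega) (by omega) (by omega) (by omega)).1
        have e : (p.1:ℕ)+2-1 = (p.1:ℕ)+1 := by omega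
        rw [e] at hk
        have := (keyabs (u ((p.1:ℕ)+2) ((p.2:ℕ)+1))).2
        have := hDM ((p.1:ℕ)+2) ((p.2:ℕ)+1) (by omega) (by omega) (by omega) (by omega)
        linarith
      · have e1 : (p.1:ℕ)+1 = N := by omega
        have e2 : (p.1:ℕ)+2 = N+1 := by omega
        rw [e1, e2]
        obtain ⟨-, hu0, -, -⟩ := huvghost ((p.2:ℕ)+1) (by omega) (by omega)
        obtain ⟨-, hM0, -, -⟩ := hMghost ((p.2:ℕ)+1) (by omega) (by omega)
        rw [hu0, hM0]
        have hk := (key (N-1) ((p.2:ℕ)+1) (by omega) (by omega) (by omega) (by omega)).2.1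
        have e3 : N-1+1 = N := by omega
        rw [e3] at hk
        have := (keyabs (u (N-1) ((p.2:ℕ)+1))).1
        have := hDM (N-1) ((p.2:ℕ)+1) (by omega) (by omega) (by omega) (by omega)
        linarith
    have hMS : h * v ((p.1:ℕ)+1) (p.2:ℕ) ≤
        D * (M ((p.1:ℕ)+1) (p.2:ℕ) + M ((p.1:ℕ)+1) ((p.2:ℕ)+1)) := by
      rcases Nat.eq_zero_or_pos (p.2:ℕ) with h0 | h0
      · rw [h0]
        obtain ⟨-, -, hv0, -⟩ := huvghost ((p.1:ℕ)+1) (by omega) (by omega)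
        obtain ⟨-, -, hM0, -⟩ := hMghost ((p.1:ℕ)+1) (by omega) (by omega)
        rw [hv0, hM0]
        have hk := (key ((p.1:ℕ)+1) 2 (by omega) (by omega) (by omega) (by omega)).2.2.1
        have e : (2:ℕ) - 1 = 1 := rfl
        rw [e] at hk
        have := (keyabs (v ((p.1:ℕ)+1) 2)).2
        have := hDM ((p.1:ℕ)+1) 2 (by omega) (by omega) (by omega) (by omega)
        linarith
      · have hk := (key ((p.1:ℕ)+1) (p.2:ℕ) (by omega) (by omega) (by omega) (by omega)).2.2.2
        have := (keyabs (v ((p.1:ℕ)+1) (p.2:ℕ))).1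
        have := hDM ((p.1:ℕ)+1) (p.2:ℕ) (by omega) (by omega) (by omega) (by omega)
        linarith
    have hMT : h * (-(v ((p.1:ℕ)+1) ((p.2:ℕ)+2))) ≤
        D * (M ((p.1:ℕ)+1) ((p.2:ℕ)+1) + M ((p.1:ℕ)+1) ((p.2:ℕ)+2)) := by
      rcases Nat.lt_or_ge ((p.2:ℕ)+2) (N+1) with h0 | h0
      · have hk := (key ((p.1:ℕ)+1) ((p.2:ℕ)+2) (by omega) (by omega) (by omega) (by omega)).2.2.1
        have e : (p.2:ℕ)+2-1 = (p.2:ℕ)+1 := by omega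
        rw [e] at hk
        have := (keyabs (v ((p.1:ℕ)+1) ((p.2:ℕ)+2))).2
        have := hDM ((p.1:ℕ)+1) ((p.2:ℕ)+2) (by omega) (by omega) (by omega) (by omega)
        linarith
      · have e1 : (p.2:ℕ)+1 = N := by omega
        have e2 : (p.2:ℕ)+2 = N+1 := by omega
        rw [e1, e2]
        obtain ⟨-, -, -, hv0⟩ := huvghost ((p.1:ℕ)+1) (by omega) (by omega)
        obtain ⟨-, -, -, hM0⟩ := hMghost ((p.1:ℕ)+1) (by omega) (by omega)
        rw [hv0, hM0]
        have hk := (key ((p.1:ℕ)+1) (N-1) (by omega) (by omega) (by omega) (by omega)).2.2.2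
        have e3 : N-1+1 = N := by omega
        rw [e3] at hk
        have := (keyabs (v ((p.1:ℕ)+1) (N-1))).1
        have := hDM ((p.1:ℕ)+1) (N-1) (by omega) (by omega) (by omega) (by omega)
        linarith
    -- coefficients are nonpositive
    have hcW := coef_nonpos h Δt D (u (p.1:ℕ) ((p.2:ℕ)+1))
      (M (p.1:ℕ) ((p.2:ℕ)+1) + M ((p.1:ℕ)+1) ((p.2:ℕ)+1)) hh hΔt hD hMW
    have hcE := coef_nonpos h Δt D (-(u ((p.1:ℕ)+2) ((p.2:ℕ)+1)))
      (M ((p.1:ℕ)+1) ((p.2:ℕ)+1) + M ((p.1:ℕ)+2) ((p.2:ℕ)+1)) hh hΔt hD hME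
    have hcS := coef_nonpos h Δt D (v ((p.1:ℕ)+1) (p.2:ℕ))
      (M ((p.1:ℕ)+1) (p.2:ℕ) + M ((p.1:ℕ)+1) ((p.2:ℕ)+1)) hh hΔt hD hMS
    have hcT := coef_nonpos h Δt D (-(v ((p.1:ℕ)+1) ((p.2:ℕ)+2)))
      (M ((p.1:ℕ)+1) ((p.2:ℕ)+1) + M ((p.1:ℕ)+1) ((p.2:ℕ)+2)) hh hΔt hD hMT
    -- unfold the entry via a Kronecker vector
    have hone := hA (Pi.single q 1) p
    rw [Matrix.mulVec_single_one, Matrix.col_apply] at hone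
    simp only [mul_one, foldIdx2D_succ N hN p.1, foldIdx2D_succ N hN p.2,
      Pi.single_apply, if_neg hpq] at hone
    rw [hone]
    split_ifs <;> (ring_nf at hcW hcE hcS hcT ⊢; linarith [hcW, hcE, hcS, hcT])
  -- positive row sums
  have hrow : ∀ p : Fin N × Fin N, 0 < ∑ q, A p q := by
    intro p
    have hp1 : (p.1 : ℕ) < N := p.1.2
    have hp2 : (p.2 : ℕ) < N := p.2.2
    have hsum : ∑ q, A p q = A.mulVec (fun _ => 1) p := by
      simp [Matrix.mulVec, dotProduct]
    have h1 := hA (fun _ => 1) p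
    have h2 := cond2 ((p.1:ℕ)+1) ((p.2:ℕ)+1) (by omega) (by omega) (by omega) (by omega)
    simp only [Nat.add_sub_cancel] at h2
    have e1 : (p.1:ℕ) + 1 + 1 = (p.1:ℕ) + 2 := rfl
    have e2 : (p.2:ℕ) + 1 + 1 = (p.2:ℕ) + 2 := rfl
    rw [e1, e2] at h2
    rw [hsum, h1]
    ring_nf
    ring_nf at h2
    linarith
  obtain ⟨hu', hinv⟩ := mmatrix_main A hoff hrow
  exact ⟨hoff, hu', hinv⟩
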